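/- [Completeness of the database-level verification algorithm (Theorem 4)] Assume V is nonempty. Let R₁, ..., R_k be relations over finite variable sets X₁, ..., X_k (the relations of the concepts and previously instantiated tuple sets along the protocol path leading to the conflicting query), let v ⊆ X₁ ∪ ⋯ ∪ X_k (the set of previously instantiated variables of the conflicting query together with its RestrictSet), and let 𝒞 be a set of predicates on tuples over v (the relevant branch conditions). Define δ = σ_{t ↦ ∀ P ∈ 𝒞, P t}( π_v(R₁ ⋈ ⋯ ⋈ R_k) ). If there exists a valuation f : ι → V such that f|Xⱼ ∈ Rⱼ for every j and P (f|v) holds for every P ∈ 𝒞 (i.e., the conflicting query is reachable from the start state of the protocol by some correct instantiation), then δ ≠ ∅, so the algorithm reports the conflict as not spurious. -/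
import Mathlib


/-- A tuple over a finite variable set `X` assigns a value to each variable in `X`. -/
def Tuple (V : Type*) {ι : Type*} (X : Finset ι) : Type _ := ↥X → V

/-- Restriction of a tuple over `X` to a subset `Y ⊆ X`. -/
def Tuple.restrict {ι V : Type*} {X Y : Finset ι} (h : Y ⊆ X) (t : Tuple V X) :
    Tuple V Y :=
  fun y => t ⟨y.1, h y.2⟩

/-- Restriction of a valuation `f : ι → V` to a tuple over `X`. -/
def restrictVal {ι V : Type*} (X : Finset ι) (f : ι → V) : Tuple V X :=
  fun x => f x.1

/-- The cylinder of a relation `R` over `X`: the set of valuations whose restriction to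
`X` lies in `R`. -/
def Cyl {ι V : Type*} {X : Finset ι} (R : Set (Tuple V X)) : Set (ι → V) :=
  {f | restrictVal X f ∈ R}

/-- The natural join of a relation over `X₁` with a relation over `X₂`: the relation
over `X₁ ∪ X₂` consisting of the tuples whose restriction to `X₁` lies in `R₁` and
whose restriction to `X₂` lies in `R₂`. -/
def natJoin {ι V : Type*} [DecidableEq ι] {X₁ X₂ : Finset ι} (R₁ : Set (Tuple V X₁))
    (R₂ : Set (Tuple V X₂)) : Set (Tuple V (X₁ ∪ X₂)) :=
  {t | t.restrict Finset.subset_union_left ∈ R₁ ∧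
       t.restrict Finset.subset_union_right ∈ R₂}

/-- The projection of a relation `R` over `X` to a subset `Y ⊆ X`: the set of
restrictions to `Y` of the tuples of `R`. -/
def proj {ι V : Type*} {X : Finset ι} (Y : Finset ι) (h : Y ⊆ X)
    (R : Set (Tuple V X)) : Set (Tuple V Y) :=
  {u | ∃ t ∈ R, t.restrict h = u}

/-- The selection of a relation `R` over `X` by a predicate `P` on tuples over `X`. -/
def sel {ι V : Type*} {X : Finset ι} (P : Tuple V X → Prop) (R : Set (Tuple V X)) :
    Set (Tuple V X) :=
  {t ∈ R | P t}

/-- A relation together with its variable set. -/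
structure DBRel (ι V : Type*) where
  X : Finset ι
  R : Set (Tuple V X)

/-- Binary natural join of bundled relations. -/
def DBRel.join {ι V : Type*} [DecidableEq ι] (A B : DBRel ι V) : DBRel ι V :=
  ⟨A.X ∪ B.X, natJoin A.R B.R⟩

/-- The iterated (left-nested) binary natural join `((R₁ ⋈ R₂) ⋈ ⋯) ⋈ R_k` of the
relations `R₁ :: [R₂, ..., R_k]`. -/
def multiJoin {ι V : Type*} [DecidableEq ι] (A : DBRel ι V) (l : List (DBRel ι V)) :
    DBRel ι V :=
  l.foldl DBRel.join A

lemma restrict_restrictVal {ι V : Type*} {X Y : Finset ι} (h : Y ⊆ X) (f : ι → V) :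
    (restrictVal X f).restrict h = restrictVal Y f := rfl

lemma multiJoin_mem {ι V : Type*} [DecidableEq ι] (A : DBRel ι V) (l : List (DBRel ι V))
    (f : ι → V) (hf : ∀ B ∈ A :: l, restrictVal B.X f ∈ B.R) :
    restrictVal (multiJoin A l).X f ∈ (multiJoin A l).R := by
  induction l generalizing A with
  | nil => exact hf A (by simp)
  | cons B l ih =>
    apply ih
    intro C hC
    rcases List.mem_cons.1 hC with h | h
    · subst h
      exact ⟨hf A (by simp), hf B (by simp)⟩
    · exact hf C (by simp [h])

/-- Completeness of the database-level verification algorithm (Theorem 4): with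
`δ = σ_{∀ P ∈ 𝒞, P}( π_v(R₁ ⋈ ⋯ ⋈ R_k) )`, if some valuation `f : ι → V` satisfies
`f|Xⱼ ∈ Rⱼ` for every `j` together with every relevant branch condition `P ∈ 𝒞` at
`f|v` (i.e. the conflicting query is reachable from the start state of the protocol by
some correct instantiation), then `δ ≠ ∅`, so the algorithm reports the conflict as not
spurious. -/
theorem verifyConflict_complete {ι V : Type*} [DecidableEq ι] [Nonempty V]
    (A : DBRel ι V) (l : List (DBRel ι V)) (v : Finset ι)
    (hv : v ⊆ (multiJoin A l).X) (𝒞 : Set (Tuple V v → Prop))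
    (hreach : ∃ f : ι → V, (∀ B ∈ A :: l, restrictVal B.X f ∈ B.R) ∧
        ∀ P ∈ 𝒞, P (restrictVal v f)) :
    sel (fun t => ∀ P ∈ 𝒞, P t) (proj v hv (multiJoin A l).R) ≠ ∅ := by
  obtain ⟨f, hf, hP⟩ := hreach
  apply Set.nonempty_iff_ne_empty.mp
  exact ⟨restrictVal v f,
    ⟨restrictVal (multiJoin A l).X f, multiJoin_mem A l f hf, restrict_restrictVal hv f⟩,
    hP⟩
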